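/- Let G be a finite simple graph, V_b ⊆ V(G), X ⊆ V_b, and ψ : X → V_b \ X injective satisfying: for all x ∈ X, ψ(x) ∉ N[x]; for all x₁, x₂ ∈ X, ψ(x₂) ∉ N(x₁); and for distinct x₁, x₂ ∈ X, N[ψ(x₁)] ∩ N[ψ(x₂)] = ∅. If S' dominates V_b \ N[X], then S' ∪ X dominates V_b and |S' ∪ X| ≤ 2|S'|. -/

import Mathlib

theorem lossy_rule_lifting {V : Type*} [Fintype V] [DecidableEq V]
    (G : SimpleGraph V) [DecidableRel G.Adj] (Vb X S' : Finset V) (ψ : V → V)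
    (hXVb : X ⊆ Vb)
    (hmaps : ∀ x ∈ X, ψ x ∈ Vb \ X)
    (hinj : Set.InjOn ψ ↑X)
    (h1 : ∀ x ∈ X, ψ x ∉ insert x (G.neighborFinset x))
    (h2 : ∀ x₁ ∈ X, ∀ x₂ ∈ X, ψ x₂ ∉ G.neighborFinset x₁)
    (h3 : ∀ x₁ ∈ X, ∀ x₂ ∈ X, x₁ ≠ x₂ →
      Disjoint (insert (ψ x₁) (G.neighborFinset (ψ x₁)))
        (insert (ψ x₂) (G.neighborFinset (ψ x₂))))
    (hS' : ∀ w ∈ Vb \ (X ∪ X.biUnion (fun x => G.neighborFinset x)), w ∈ S' ∨ ∃ s ∈ S', G.Adj s w) :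
    (∀ w ∈ Vb, w ∈ S' ∪ X ∨ ∃ s ∈ S' ∪ X, G.Adj s w) ∧ (S' ∪ X).card ≤ 2 * S'.card := by
  constructor
  · intro w hw
    by_cases hwX : w ∈ X ∪ X.biUnion (fun x => G.neighborFinset x)
    · rcases Finset.mem_union.mp hwX with h | h
      · exact Or.inl (Finset.mem_union.mpr (Or.inr h))
      · rcases Finset.mem_biUnion.mp h with ⟨x, hx, hadj⟩
        exact Or.inr ⟨x, Finset.mem_union.mpr (Or.inr hx),
          (SimpleGraph.mem_neighborFinset G x w).mp hadj⟩
    · rcases hS' w (Finset.mem_sdiff.mpr ⟨hw, hwX⟩) with h | ⟨s, hs, hadj⟩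
      · exact Or.inl (Finset.mem_union.mpr (Or.inl h))
      · exact Or.inr ⟨s, Finset.mem_union.mpr (Or.inl hs), hadj⟩
  · have key : ∀ x ∈ X, ∃ s ∈ S', s ∈ insert (ψ x) (G.neighborFinset (ψ x)) := by
      intro x hx
      have hψVb : ψ x ∈ Vb := (Finset.mem_sdiff.mp (hmaps x hx)).1
      have hψnot : ψ x ∉ X ∪ X.biUnion (fun x => G.neighborFinset x) := by
        intro hmem
        rcases Finset.mem_union.mp hmem with h | h
        · exact (Finset.mem_sdiff.mp (hmaps x hx)).2 h
        · rcases Finset.mem_biUnion.mp h with ⟨x₁, hx₁, hadj⟩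
          exact h2 x₁ hx₁ x hx hadj
      rcases hS' (ψ x) (Finset.mem_sdiff.mpr ⟨hψVb, hψnot⟩) with h | ⟨s, hs, hadj⟩
      · exact ⟨ψ x, h, Finset.mem_insert_self _ _⟩
      · exact ⟨s, hs, Finset.mem_insert.mpr (Or.inr
          ((SimpleGraph.mem_neighborFinset G (ψ x) s).mpr hadj.symm))⟩
    choose f hfS hfN using key
    have hcard : X.card ≤ S'.card := by
      apply Finset.card_le_card_of_injOn (fun x => if h : x ∈ X then f x h else x)
      · intro x hx
        simp only [Finset.mem_coe] at hx ⊢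
        simp only [dif_pos hx]
        exact hfS x hx
      · intro x₁ hx₁ x₂ hx₂ heq
        simp only [Finset.mem_coe] at hx₁ hx₂
        simp only [dif_pos hx₁, dif_pos hx₂] at heq
        by_contra hne
        exact Finset.disjoint_left.mp (h3 x₁ hx₁ x₂ hx₂ hne)
          (hfN x₁ hx₁) (heq ▸ hfN x₂ hx₂)
    calc (S' ∪ X).card ≤ S'.card + X.card := Finset.card_union_le _ _
      _ ≤ S'.card + S'.card := by omega
      _ = 2 * S'.card := by ring
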